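/- In the setting of the previous construction (consistent sequences $\{V_n\},\{W_n\},\{U_n\}$, intersection- and projection-compatible cones $\{K_n\}$, $C_n = \{x : \exists y, A_n x + B_n y + u_n \in K_n\}$, with $\{A_n\},\{B_n\},\{B_n^*\}$ morphisms, $\{u_n\}$ freely-described, and $u_{n+1}-u_n \in K_{n+1}$), if additionally $\{A_n^*\}$ is a morphism of sequences, then the sequence $\{C_n\}$ is projection-compatible: $\mathcal{P}_{V_n} C_{n+1} = C_n$ for all $n$. -/

import Mathlib

/-- In the setting of Theorem on certified compatibility (consistent
sequences `{V n}, {W n}, {U n}`, intersection- and projection-compatible cones `{K n}`,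
`C n = {x | ∃ y, A n x + B n y + u n ∈ K n}`, with `{A n}, {B n}, {B n *}` morphisms,
`{u n}` freely described, and `u (n+1) - u n ∈ K (n+1)`), if additionally `{A n *}` is a
morphism of sequences, then the sequence `{C n}` is projection-compatible:
`𝒫_{V n} '' C (n+1) = C n` for all `n`. -/
theorem certified_projection_compatibility
    {Γ : Type*} [Group Γ] (G : ℕ → Subgroup Γ) (hG : ∀ n, G n ≤ G (n + 1))
    {HV HW HU : Type*}
    [NormedAddCommGroup HV] [InnerProductSpace ℝ HV] [FiniteDimensional ℝ HV]
    [NormedAddCommGroup HW] [InnerProductSpace ℝ HW] [FiniteDimensional ℝ HW]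
    [NormedAddCommGroup HU] [InnerProductSpace ℝ HU] [FiniteDimensional ℝ HU]
    (ρV : Γ →* (HV ≃ₗᵢ[ℝ] HV)) (ρW : Γ →* (HW ≃ₗᵢ[ℝ] HW)) (ρU : Γ →* (HU ≃ₗᵢ[ℝ] HU))
    (V : ℕ → Submodule ℝ HV) (hV : ∀ n, V n ≤ V (n + 1))
    (W : ℕ → Submodule ℝ HW) (hW : ∀ n, W n ≤ W (n + 1))
    (U : ℕ → Submodule ℝ HU) (hU : ∀ n, U n ≤ U (n + 1))
    (hactV : ∀ n m, n ≤ m → ∀ g ∈ G n, ∀ v ∈ V m, ρV g v ∈ V m)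
    (hactW : ∀ n m, n ≤ m → ∀ g ∈ G n, ∀ w ∈ W m, ρW g w ∈ W m)
    (hactU : ∀ n m, n ≤ m → ∀ g ∈ G n, ∀ u ∈ U m, ρU g u ∈ U m)
    (K : ℕ → ConvexCone ℝ HU)
    (hKU : ∀ n, (K n : Set HU) ⊆ (U n : Set HU))
    (hKinv : ∀ n, ∀ g ∈ G n, ∀ x ∈ K n, ρU g x ∈ K n)
    (hKint : ∀ n, (K (n + 1) : Set HU) ∩ (U n : Set HU) = (K n : Set HU))
    (hKproj : ∀ n, (fun x : HU => (Submodule.orthogonalProjectionOnto (U n) x : HU)) ''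
        (K (n + 1) : Set HU) = (K n : Set HU))
    (A : ℕ → HV →ₗ[ℝ] HU) (B : ℕ → HW →ₗ[ℝ] HU)
    (hAmaps : ∀ n, ∀ v ∈ V n, A n v ∈ U n)
    (hAequiv : ∀ n, ∀ g ∈ G n, ∀ v ∈ V n, A n (ρV g v) = ρU g (A n v))
    (hAcompat : ∀ n, ∀ v ∈ V n, A (n + 1) v = A n v)
    (hAadj : ∀ n, ∀ v ∈ V (n + 1),
      (Submodule.orthogonalProjectionOnto (U n) (A (n + 1) v) : HU)
        = A n (Submodule.orthogonalProjectionOnto (V n) v))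
    (hBmaps : ∀ n, ∀ w ∈ W n, B n w ∈ U n)
    (hBequiv : ∀ n, ∀ g ∈ G n, ∀ w ∈ W n, B n (ρW g w) = ρU g (B n w))
    (hBcompat : ∀ n, ∀ w ∈ W n, B (n + 1) w = B n w)
    (hBadj : ∀ n, ∀ w ∈ W (n + 1),
      (Submodule.orthogonalProjectionOnto (U n) (B (n + 1) w) : HU)
        = B n (Submodule.orthogonalProjectionOnto (W n) w))
    (u : ℕ → HU)
    (humem : ∀ n, u n ∈ U n)
    (huinv : ∀ n, ∀ g ∈ G n, ρU g (u n) = u n)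
    (hufree : ∀ n, (Submodule.orthogonalProjectionOnto (U n) (u (n + 1)) : HU) = u n)
    (hucone : ∀ n, u (n + 1) - u n ∈ K (n + 1)) :
    ∀ n, (fun x : HV => (Submodule.orthogonalProjectionOnto (V n) x : HV)) ''
          {x : HV | x ∈ V (n + 1) ∧
            ∃ y ∈ W (n + 1), A (n + 1) x + B (n + 1) y + u (n + 1) ∈ K (n + 1)}
        = {x : HV | x ∈ V n ∧ ∃ y ∈ W n, A n x + B n y + u n ∈ K n} := by
  intro n
  ext x
  constructor
  · rintro ⟨z, ⟨hz, y, hy, hcone⟩, rfl⟩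
    refine ⟨(Submodule.orthogonalProjectionOnto (V n) z).2, (Submodule.orthogonalProjectionOnto (W n) y : HW),
      (Submodule.orthogonalProjectionOnto (W n) y).2, ?_⟩
    have h1 : (Submodule.orthogonalProjectionOnto (U n) (A (n+1) z + B (n+1) y + u (n+1)) : HU) ∈
        (K n : Set HU) := by
      rw [← hKproj n]; exact ⟨_, hcone, rfl⟩
    simpa only [map_add, Submodule.coe_add, hAadj n z hz, hBadj n y hy, hufree n, SetLike.mem_coe] using h1
  · rintro ⟨hx, y, hy, hc⟩
    refine ⟨x, ⟨hV n hx, y, hW n hy, ?_⟩, Submodule.starProjection_eq_self_iff.mpr hx⟩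
    have hsub : (K n : Set HU) ⊆ (K (n+1) : Set HU) := by
      rw [← hKint n]; exact Set.inter_subset_left
    have heq : A (n+1) x + B (n+1) y + u (n+1)
        = (A n x + B n y + u n) + (u (n+1) - u n) := by
      rw [hAcompat n x hx, hBcompat n y hy]; abel
    rw [heq]
    exact (K (n+1)).add_mem (hsub hc) (hucone n)
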